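/- arXiv:2412.05461 — 11 statements merged into one kernel-verified Lean document; each statement's English description precedes it below -/
import Mathlib

section
/- Let g, f1, f2, f3 be formal power series over ℚ such that g is supported on multiples of 3 with constant coefficient 1, and each fᵢ is supported on residue 1 mod 3 with coefficient of X equal to 1. Then the triple Riordan matrix a(n,k) = coeff n (g * f1^⌊(k+2)/3⌋ * f2^⌊(k+1)/3⌋ * f3^⌊k/3⌋) is lower triangular with unit diagonal: a(n,k) = 0 whenever k > n, and a(n,n) = 1 for all n. -/
open PowerSeries Finset

/-- The entry `a(n,k)` of the triple Riordan matrix associated to `(g, f1, f2, f3)`. -/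
noncomputable def tripleEntry (g f1 f2 f3 : PowerSeries ℚ) (n k : ℕ) : ℚ :=
  coeff n (g * f1 ^ ((k + 2) / 3) * f2 ^ ((k + 1) / 3) * f3 ^ (k / 3))

lemma exists_shift (f : PowerSeries ℚ) (h0 : coeff 0 f = 0) :
    ∃ u, f = X * u ∧ constantCoeff u = coeff 1 f := by
  refine ⟨PowerSeries.mk fun m => coeff (m + 1) f, ?_, by simp⟩
  ext n
  cases n with
  | zero => simp [h0]
  | succ n => simp [PowerSeries.coeff_succ_X_mul]

lemma key (g f1 f2 f3 : PowerSeries ℚ)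
    (hg0 : coeff 0 g = 1)
    (hf10 : coeff 0 f1 = 0) (hf1' : coeff 1 f1 = 1)
    (hf20 : coeff 0 f2 = 0) (hf2' : coeff 1 f2 = 1)
    (hf30 : coeff 0 f3 = 0) (hf3' : coeff 1 f3 = 1)
    (k : ℕ) :
    ∃ Q : PowerSeries ℚ,
      g * f1 ^ ((k + 2) / 3) * f2 ^ ((k + 1) / 3) * f3 ^ (k / 3) = X ^ k * Q ∧
        constantCoeff Q = 1 := by
  obtain ⟨u1, e1, c1⟩ := exists_shift f1 hf10
  obtain ⟨u2, e2, c2⟩ := exists_shift f2 hf20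
  obtain ⟨u3, e3, c3⟩ := exists_shift f3 hf30
  refine ⟨g * u1 ^ ((k + 2) / 3) * u2 ^ ((k + 1) / 3) * u3 ^ (k / 3), ?_, ?_⟩
  · have hsum : (k + 2) / 3 + (k + 1) / 3 + k / 3 = k := by omega
    rw [e1, e2, e3]
    calc g * (X * u1) ^ ((k + 2) / 3) * (X * u2) ^ ((k + 1) / 3) * (X * u3) ^ (k / 3)
        = X ^ ((k + 2) / 3 + (k + 1) / 3 + k / 3) *
            (g * u1 ^ ((k + 2) / 3) * u2 ^ ((k + 1) / 3) * u3 ^ (k / 3)) := by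
          rw [mul_pow, mul_pow, mul_pow, pow_add, pow_add]; ring
      _ = _ := by rw [hsum]
  · simp only [map_mul, map_pow, c1, c2, c3]
    rw [← PowerSeries.coeff_zero_eq_constantCoeff_apply, hg0, hf1', hf2', hf3']
    simp

theorem tripleRiordan_lower_triangular_unit_diagonal
    (g f1 f2 f3 : PowerSeries ℚ)
    (hg : ∀ n : ℕ, n % 3 ≠ 0 → coeff n g = 0) (hg0 : coeff 0 g = 1)
    (hf1 : ∀ n : ℕ, n % 3 ≠ 1 → coeff n f1 = 0) (hf1' : coeff 1 f1 = 1)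
    (hf2 : ∀ n : ℕ, n % 3 ≠ 1 → coeff n f2 = 0) (hf2' : coeff 1 f2 = 1)
    (hf3 : ∀ n : ℕ, n % 3 ≠ 1 → coeff n f3 = 0) (hf3' : coeff 1 f3 = 1) :
    (∀ n k : ℕ, n < k → tripleEntry g f1 f2 f3 n k = 0) ∧
      (∀ n : ℕ, tripleEntry g f1 f2 f3 n n = 1) := by
  have hf10 := hf1 0 (by norm_num)
  have hf20 := hf2 0 (by norm_num)
  have hf30 := hf3 0 (by norm_num)
  constructor
  · intro n k hnk
    obtain ⟨Q, hQ, -⟩ := key g f1 f2 f3 hg0 hf10 hf1' hf20 hf2' hf30 hf3' k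
    unfold tripleEntry
    rw [hQ]
    exact PowerSeries.X_pow_dvd_iff.mp ⟨Q, rfl⟩ n hnk
  · intro n
    obtain ⟨Q, hQ, hQ0⟩ := key g f1 f2 f3 hg0 hf10 hf1' hf20 hf2' hf30 hf3' n
    unfold tripleEntry
    rw [hQ, mul_comm]
    have := PowerSeries.coeff_mul_X_pow Q n 0
    rw [zero_add] at this
    rw [this, PowerSeries.coeff_zero_eq_constantCoeff_apply, hQ0]
end

section
/- Let g, f1, f2, f3 be formal power series over ℚ such that g is supported on multiples of 3 and each fᵢ is supported on residue 1 mod 3. Then the triple Riordan matrix has the mod-3 checkerboard property: a(n,k) = coeff n (g * f1^⌊(k+2)/3⌋ * f2^⌊(k+1)/3⌋ * f3^⌊k/3⌋) = 0 whenever n % 3 ≠ k % 3. -/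
open PowerSeries Finset

lemma mul_support3 {f g : PowerSeries ℚ} {r s : ℕ}
    (hf : ∀ n : ℕ, n % 3 ≠ r % 3 → coeff n f = 0)
    (hg : ∀ n : ℕ, n % 3 ≠ s % 3 → coeff n g = 0) :
    ∀ n : ℕ, n % 3 ≠ (r + s) % 3 → coeff n (f * g) = 0 := by
  intro n hn
  rw [coeff_mul]
  apply Finset.sum_eq_zero
  intro p hp
  rcases eq_or_ne (p.1 % 3) (r % 3) with h1 | h1
  · rcases eq_or_ne (p.2 % 3) (s % 3) with h2 | h2
    · exfalso
      apply hn
      have := Finset.HasAntidiagonal.mem_antidiagonal.mp hp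
      omega
    · rw [hg _ h2, mul_zero]
  · rw [hf _ h1, zero_mul]

lemma pow_support3 {f : PowerSeries ℚ}
    (hf : ∀ n : ℕ, n % 3 ≠ 1 → coeff n f = 0) (m : ℕ) :
    ∀ n : ℕ, n % 3 ≠ m % 3 → coeff n (f ^ m) = 0 := by
  induction m with
  | zero =>
    intro n hn
    simp only [pow_zero, coeff_one]
    rw [if_neg (by omega)]
  | succ m ih =>
    intro n hn
    rw [pow_succ]
    exact mul_support3 (s := 1) ih (fun n h => hf n (by omega)) n (by omega)

theorem tripleRiordan_checkerboard
    (g f1 f2 f3 : PowerSeries ℚ)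
    (hg : ∀ n : ℕ, n % 3 ≠ 0 → coeff n g = 0)
    (hf1 : ∀ n : ℕ, n % 3 ≠ 1 → coeff n f1 = 0)
    (hf2 : ∀ n : ℕ, n % 3 ≠ 1 → coeff n f2 = 0)
    (hf3 : ∀ n : ℕ, n % 3 ≠ 1 → coeff n f3 = 0) :
    ∀ n k : ℕ, n % 3 ≠ k % 3 → tripleEntry g f1 f2 f3 n k = 0 := by
  intro n k hnk
  unfold tripleEntry
  have h0 : ∀ m : ℕ, m % 3 ≠ 0 % 3 → coeff m g = 0 := by simpa using hg
  have h1 := mul_support3 h0 (pow_support3 hf1 ((k + 2) / 3))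
  have h2 := mul_support3 h1 (pow_support3 hf2 ((k + 1) / 3))
  have h3 := mul_support3 h2 (pow_support3 hf3 (k / 3))
  apply h3
  have hk : (k + 2) / 3 + (k + 1) / 3 + k / 3 = k := by omega
  omega
end

section
/- Let g, G, f1, f2, f3, F1, F2, F3, h, q1, q2, q3 be formal power series over ℚ such that: g and G are supported on multiples of 3; each fᵢ and each Fᵢ is supported on residue 1 mod 3; h has zero constant coefficient with h^3 = f1*f2*f3; and fᵢ = h*qᵢ for i = 1,2,3. Write e1(k) = ⌊(k+2)/3⌋, e2(k) = ⌊(k+1)/3⌋, e3(k) = ⌊k/3⌋. Then the matrix representing the triple Riordan product equals the product of the representing matrices: for all natural numbers n and k, ∑_{j=0}^{n} [coeff n (g * f1^{e1(j)} * f2^{e2(j)} * f3^{e3(j)})] * [coeff j (G * F1^{e1(k)} * F2^{e2(k)} * F3^{e3(k)})] = coeff n ((g * subst h G) * (q1 * subst h F1)^{e1(k)} * (q2 * subst h F2)^{e2(k)} * (q3 * subst h F3)^{e3(k)}). -/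
open PowerSeries Finset

/-- Substitution of the power series `h` (with zero constant coefficient) into `F`. -/
noncomputable def psSubst (h F : PowerSeries ℚ) : PowerSeries ℚ :=
  PowerSeries.mk fun n => ∑ k ∈ range (n + 1), coeff k F * coeff n (h ^ k)


section Aux

variable {h : PowerSeries ℚ}

lemma coeff_hpow (hh0 : coeff 0 h = 0) {m j : ℕ} (hmj : m < j) :
    coeff m (h ^ j) = 0 := by
  have hX : (X : PowerSeries ℚ) ∣ h := by
    rw [PowerSeries.X_dvd_iff, ← coeff_zero_eq_constantCoeff_apply]
    exact hh0
  exact (PowerSeries.X_pow_dvd_iff.mp (pow_dvd_pow_of_dvd hX j)) m hmj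

lemma coeff_mul_subst (hh0 : coeff 0 h = 0) (P A : PowerSeries ℚ) (n : ℕ) :
    coeff n (P * psSubst h A) =
      ∑ j ∈ range (n + 1), coeff j A * coeff n (P * h ^ j) := by
  rw [coeff_mul]
  have step : ∀ p ∈ antidiagonal n,
      coeff p.1 P * coeff p.2 (psSubst h A)
      = ∑ j ∈ range (n + 1), coeff j A * (coeff p.1 P * coeff p.2 (h ^ j)) := by
    intro p hp
    have hp2 : p.2 ≤ n := by have := Finset.HasAntidiagonal.mem_antidiagonal.mp hp; omega
    have h2 : coeff p.2 (psSubst h A)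
        = ∑ j ∈ range (n + 1), coeff j A * coeff p.2 (h ^ j) := by
      rw [psSubst, coeff_mk]
      refine Finset.sum_subset ?_ ?_
      · intro x hx; simp only [Finset.mem_range] at hx ⊢; omega
      · intro x _ hx'
        simp only [Finset.mem_range, not_lt] at hx'
        rw [coeff_hpow hh0 (by omega), mul_zero]
    rw [h2, Finset.mul_sum]
    exact Finset.sum_congr rfl fun j _ => by ring
  rw [Finset.sum_congr rfl step, Finset.sum_comm]
  exact Finset.sum_congr rfl fun j _ => by rw [coeff_mul, Finset.mul_sum]

lemma subst_mul (hh0 : coeff 0 h = 0) (A B : PowerSeries ℚ) :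
    psSubst h (A * B) = psSubst h A * psSubst h B := by
  ext n
  have hr : coeff n (psSubst h A * psSubst h B)
      = ∑ j ∈ range (n + 1), coeff j B *
          ∑ i ∈ range (n + 1), coeff i A * coeff n (h ^ j * h ^ i) := by
    rw [coeff_mul_subst hh0 (psSubst h A) B n]
    refine Finset.sum_congr rfl fun j _ => ?_
    rw [mul_comm (psSubst h A) (h ^ j), coeff_mul_subst hh0 (h ^ j) A n]
  rw [hr]
  have hl : coeff n (psSubst h (A * B))
      = ∑ j ∈ range (n + 1), ∑ p ∈ antidiagonal j,
          coeff p.1 A * coeff p.2 B * coeff n (h ^ (p.1 + p.2)) := by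
    rw [psSubst, coeff_mk]
    refine Finset.sum_congr rfl fun j _ => ?_
    rw [coeff_mul, Finset.sum_mul]
    refine Finset.sum_congr rfl fun p hp => ?_
    rw [Finset.HasAntidiagonal.mem_antidiagonal.mp hp]
  rw [hl]
  -- convert the sum over antidiagonals to a sum over the product
  have hdisj : (↑(range (n + 1)) : Set ℕ).PairwiseDisjoint (antidiagonal ·) := by
    intro x _ y _ hxy
    simp only [Finset.disjoint_left]
    intro p hp1 hp2
    exact hxy ((Finset.HasAntidiagonal.mem_antidiagonal.mp hp1).symm.trans (Finset.HasAntidiagonal.mem_antidiagonal.mp hp2))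
  rw [← Finset.sum_biUnion hdisj]
  have hsub : (range (n + 1)).biUnion (antidiagonal ·) ⊆ range (n + 1) ×ˢ range (n + 1) := by
    intro p hp
    simp only [Finset.mem_biUnion, Finset.mem_range] at hp
    obtain ⟨j, hj, hpj⟩ := hp
    have := Finset.HasAntidiagonal.mem_antidiagonal.mp hpj
    simp only [Finset.mem_product, Finset.mem_range]
    omega
  rw [Finset.sum_subset hsub ?vanish]
  case vanish =>
    intro p hp hp'
    have hgt : n < p.1 + p.2 := by
      by_contra hle
      exact hp' (Finset.mem_biUnion.mpr ⟨p.1 + p.2, Finset.mem_range.mpr (by omega),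
        Finset.HasAntidiagonal.mem_antidiagonal.mpr rfl⟩)
    rw [coeff_hpow hh0 hgt, mul_zero]
  rw [Finset.sum_product]
  rw [Finset.sum_comm]
  refine Finset.sum_congr rfl fun j _ => ?_
  rw [Finset.mul_sum]
  refine Finset.sum_congr rfl fun i _ => ?_
  rw [← pow_add, add_comm j i]
  ring

lemma subst_one (hh0 : coeff 0 h = 0) : psSubst h 1 = 1 := by
  ext n
  rw [psSubst, coeff_mk]
  rw [Finset.sum_eq_single 0]
  · simp
  · intro j _ hj
    rw [PowerSeries.coeff_one, if_neg hj, zero_mul]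
  · intro hn; simp at hn

lemma subst_pow (hh0 : coeff 0 h = 0) (A : PowerSeries ℚ) (m : ℕ) :
    psSubst h (A ^ m) = (psSubst h A) ^ m := by
  induction m with
  | zero => simpa using subst_one hh0
  | succ m ih => rw [pow_succ, subst_mul hh0, ih, pow_succ]

lemma supp_mul {A B : PowerSeries ℚ} {a b : ℕ}
    (hA : ∀ n : ℕ, n % 3 ≠ a % 3 → coeff n A = 0)
    (hB : ∀ n : ℕ, n % 3 ≠ b % 3 → coeff n B = 0) :
    ∀ n : ℕ, n % 3 ≠ (a + b) % 3 → coeff n (A * B) = 0 := by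
  intro n hn
  rw [coeff_mul]
  apply Finset.sum_eq_zero
  intro p hp
  have hpn := Finset.HasAntidiagonal.mem_antidiagonal.mp hp
  by_cases h1 : p.1 % 3 = a % 3
  · rw [hB p.2 (by omega), mul_zero]
  · rw [hA p.1 h1, zero_mul]

lemma supp_pow {A : PowerSeries ℚ} {a : ℕ}
    (hA : ∀ n : ℕ, n % 3 ≠ a % 3 → coeff n A = 0) (m : ℕ) :
    ∀ n : ℕ, n % 3 ≠ (m * a) % 3 → coeff n (A ^ m) = 0 := by
  induction m with
  | zero =>
    intro n hn
    simp only [Nat.zero_mul] at hn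
    rw [pow_zero, PowerSeries.coeff_one, if_neg (by omega)]
  | succ m ih =>
    intro n hn
    rw [pow_succ]
    exact supp_mul ih hA n (by rwa [show m * a + a = (m+1) * a from by ring])

lemma coeff_M_lt {G F1 F2 F3 : PowerSeries ℚ}
    (h1 : coeff 0 F1 = 0) (h2 : coeff 0 F2 = 0) (h3 : coeff 0 F3 = 0)
    (a b c : ℕ) {j : ℕ} (hj : j < a + b + c) :
    coeff j (G * F1 ^ a * F2 ^ b * F3 ^ c) = 0 := by
  have hX : ∀ (F : PowerSeries ℚ), coeff 0 F = 0 → (X : PowerSeries ℚ) ∣ F := by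
    intro F hF
    rw [PowerSeries.X_dvd_iff, ← coeff_zero_eq_constantCoeff_apply]
    exact hF
  have hd : (X : PowerSeries ℚ) ^ (a + b + c) ∣ G * F1 ^ a * F2 ^ b * F3 ^ c := by
    rw [pow_add, pow_add]
    exact mul_dvd_mul (mul_dvd_mul ((pow_dvd_pow_of_dvd (hX F1 h1) a).mul_left G)
      (pow_dvd_pow_of_dvd (hX F2 h2) b)) (pow_dvd_pow_of_dvd (hX F3 h3) c)
  exact PowerSeries.X_pow_dvd_iff.mp hd j hj

end Aux

theorem tripleRiordan_matrix_product
    (g G f1 f2 f3 F1 F2 F3 h q1 q2 q3 : PowerSeries ℚ)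
    (hg : ∀ n : ℕ, n % 3 ≠ 0 → coeff n g = 0)
    (hG : ∀ n : ℕ, n % 3 ≠ 0 → coeff n G = 0)
    (hf1 : ∀ n : ℕ, n % 3 ≠ 1 → coeff n f1 = 0)
    (hf2 : ∀ n : ℕ, n % 3 ≠ 1 → coeff n f2 = 0)
    (hf3 : ∀ n : ℕ, n % 3 ≠ 1 → coeff n f3 = 0)
    (hF1 : ∀ n : ℕ, n % 3 ≠ 1 → coeff n F1 = 0)
    (hF2 : ∀ n : ℕ, n % 3 ≠ 1 → coeff n F2 = 0)
    (hF3 : ∀ n : ℕ, n % 3 ≠ 1 → coeff n F3 = 0)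
    (hh0 : coeff 0 h = 0)
    (hh3 : h ^ 3 = f1 * f2 * f3)
    (hq1 : f1 = h * q1) (hq2 : f2 = h * q2) (hq3 : f3 = h * q3) :
    ∀ n k : ℕ,
      ∑ j ∈ range (n + 1),
        (coeff n (g * f1 ^ ((j + 2) / 3) * f2 ^ ((j + 1) / 3) * f3 ^ (j / 3))) *
          (coeff j (G * F1 ^ ((k + 2) / 3) * F2 ^ ((k + 1) / 3) * F3 ^ (k / 3))) =
      coeff n ((g * psSubst h G) * (q1 * psSubst h F1) ^ ((k + 2) / 3) *
        (q2 * psSubst h F2) ^ ((k + 1) / 3) * (q3 * psSubst h F3) ^ (k / 3)) := by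
  intro n k
  set a := (k + 2) / 3 with ha
  set b := (k + 1) / 3 with hb
  set c := k / 3 with hc
  have habc : a + b + c = k := by omega
  set M := G * F1 ^ a * F2 ^ b * F3 ^ c with hMdef
  have hsub : psSubst h M = psSubst h G * (psSubst h F1) ^ a * (psSubst h F2) ^ b *
      (psSubst h F3) ^ c := by
    rw [hMdef, subst_mul hh0, subst_mul hh0, subst_mul hh0, subst_pow hh0,
      subst_pow hh0, subst_pow hh0]
  have hRHS : (g * psSubst h G) * (q1 * psSubst h F1) ^ a * (q2 * psSubst h F2) ^ b *
      (q3 * psSubst h F3) ^ c = (g * q1 ^ a * q2 ^ b * q3 ^ c) * psSubst h M := by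
    rw [hsub]; ring
  rw [hRHS, coeff_mul_subst hh0]
  refine Finset.sum_congr rfl fun j _ => ?_
  by_cases hMj : coeff j M = 0
  · rw [hMj, mul_zero, zero_mul]
  have hjk : a + b + c ≤ j := by
    by_contra hlt
    exact hMj (coeff_M_lt (hF1 0 (by norm_num)) (hF2 0 (by norm_num))
      (hF3 0 (by norm_num)) a b c (by omega))
  have hmod : j % 3 = k % 3 := by
    by_contra hne
    apply hMj
    have hG' : ∀ m : ℕ, m % 3 ≠ 0 % 3 → coeff m G = 0 := fun m hm => hG m (by omega)
    have hF1' : ∀ m : ℕ, m % 3 ≠ 1 % 3 → coeff m F1 = 0 := fun m hm => hF1 m (by omega)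
    have hF2' : ∀ m : ℕ, m % 3 ≠ 1 % 3 → coeff m F2 = 0 := fun m hm => hF2 m (by omega)
    have hF3' : ∀ m : ℕ, m % 3 ≠ 1 % 3 → coeff m F3 = 0 := fun m hm => hF3 m (by omega)
    have s := supp_mul (supp_mul (supp_mul hG' (supp_pow hF1' a)) (supp_pow hF2' b))
      (supp_pow hF3' c)
    refine s j ?_
    have : (0 + a * 1 + b * 1 + c * 1) = k := by omega
    omega
  obtain ⟨d, hjd⟩ : ∃ d, j = k + 3 * d := ⟨(j - k) / 3, by omega⟩
  have e1 : (j + 2) / 3 = a + d := by omega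
  have e2 : (j + 1) / 3 = b + d := by omega
  have e3 : j / 3 = c + d := by omega
  have key : h ^ 3 * (q1 * q2 * q3) = h ^ 3 := by
    conv_rhs => rw [hh3, hq1, hq2, hq3]
    ring
  have hdd : h ^ (3 * d) * (q1 * q2 * q3) ^ d = h ^ (3 * d) := by
    rw [pow_mul, ← mul_pow, key]
  have hser : g * f1 ^ ((j + 2) / 3) * f2 ^ ((j + 1) / 3) * f3 ^ (j / 3)
      = g * q1 ^ a * q2 ^ b * q3 ^ c * h ^ j := by
    rw [e1, e2, e3, hq1, hq2, hq3, hjd, ← habc]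
    calc g * (h * q1) ^ (a + d) * (h * q2) ^ (b + d) * (h * q3) ^ (c + d)
        = g * q1 ^ a * q2 ^ b * q3 ^ c * (h ^ a * h ^ b * h ^ c) *
            (h ^ (3 * d) * (q1 * q2 * q3) ^ d) := by ring
      _ = g * q1 ^ a * q2 ^ b * q3 ^ c * (h ^ a * h ^ b * h ^ c) * h ^ (3 * d) := by
          rw [hdd]
      _ = g * q1 ^ a * q2 ^ b * q3 ^ c * h ^ (a + b + c + 3 * d) := by ring
  rw [hser]
  ring
end

section
/- (Fundamental theorem of the triple Riordan group.) Let g, f1, f2, f3, h be formal power series over ℚ with g supported on multiples of 3, each fᵢ supported on residue 1 mod 3 with zero constant coefficient, h having zero constant coefficient and h^3 = f1*f2*f3. Then for every power series G supported on multiples of 3 and every natural number n: ∑_{k=0}^{n} a(n,k) * (coeff k G) = coeff n (g * subst h G), where a(n,k) = coeff n (g * f1^⌊(k+2)/3⌋ * f2^⌊(k+1)/3⌋ * f3^⌊k/3⌋). -/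
open PowerSeries Finset

/-- Substitution of the power series `h` (with zero constant coefficient) into `F`. -/
noncomputable def subst (h F : PowerSeries ℚ) : PowerSeries ℚ :=
  PowerSeries.mk fun n => ∑ k ∈ range (n + 1), coeff k F * coeff n (h ^ k)

theorem tripleRiordan_fundamental_theorem
    (g f1 f2 f3 h : PowerSeries ℚ)
    (hg : ∀ n : ℕ, n % 3 ≠ 0 → coeff n g = 0)
    (hf1 : ∀ n : ℕ, n % 3 ≠ 1 → coeff n f1 = 0) (hf1' : coeff 0 f1 = 0)
    (hf2 : ∀ n : ℕ, n % 3 ≠ 1 → coeff n f2 = 0) (hf2' : coeff 0 f2 = 0)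
    (hf3 : ∀ n : ℕ, n % 3 ≠ 1 → coeff n f3 = 0) (hf3' : coeff 0 f3 = 0)
    (hh0 : coeff 0 h = 0)
    (hh3 : h ^ 3 = f1 * f2 * f3) :
    ∀ (G : PowerSeries ℚ), (∀ n : ℕ, n % 3 ≠ 0 → coeff n G = 0) →
      ∀ n : ℕ,
        ∑ k ∈ range (n + 1),
          (coeff n (g * f1 ^ ((k + 2) / 3) * f2 ^ ((k + 1) / 3) * f3 ^ (k / 3))) *
            coeff k G =
        coeff n (g * _root_.subst h G) := by
  intro G hG n
  -- vanishing of low coefficients of h^k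
  have hv : ∀ m k : ℕ, m < k → coeff m (h ^ k) = 0 := by
    obtain ⟨h', rfl⟩ := (PowerSeries.X_dvd_iff).mpr (by simpa using hh0)
    intro m k hmk
    rw [mul_pow, PowerSeries.coeff_X_pow_mul', if_neg (by omega)]
  -- RHS as a finite sum
  have key : coeff n (g * _root_.subst h G)
      = ∑ k ∈ range (n + 1), coeff k G * coeff n (g * h ^ k) := by
    rw [PowerSeries.coeff_mul]
    have step : ∀ p ∈ antidiagonal n,
        coeff p.1 g * coeff p.2 (_root_.subst h G)
          = ∑ k ∈ range (n + 1), coeff p.1 g * (coeff k G * coeff p.2 (h ^ k)) := by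
      intro p hp
      have hp2 : p.2 ≤ n := by
        have := Finset.HasAntidiagonal.mem_antidiagonal.mp hp; omega
      have : coeff p.2 (_root_.subst h G)
          = ∑ k ∈ range (n + 1), coeff k G * coeff p.2 (h ^ k) := by
        rw [_root_.subst, PowerSeries.coeff_mk]
        refine Finset.sum_subset (by intro x hx; simp at hx ⊢; omega) ?_
        intro x hx hx'
        simp only [Finset.mem_range] at hx hx'
        rw [hv p.2 x (by omega), mul_zero]
      rw [this, Finset.mul_sum]
    rw [Finset.sum_congr rfl step, Finset.sum_comm]
    refine Finset.sum_congr rfl fun k _ => ?_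
    rw [PowerSeries.coeff_mul, Finset.mul_sum]
    refine Finset.sum_congr rfl fun p _ => ?_
    ring
  rw [key]
  refine Finset.sum_congr rfl fun k hk => ?_
  by_cases h3 : k % 3 = 0
  · have e2 : (k + 2) / 3 = k / 3 := by omega
    have e1 : (k + 1) / 3 = k / 3 := by omega
    have hhk : h ^ k = f1 ^ (k / 3) * f2 ^ (k / 3) * f3 ^ (k / 3) := by
      have : h ^ k = (h ^ 3) ^ (k / 3) := by
        rw [← pow_mul]; congr 1; omega
      rw [this, hh3, mul_pow, mul_pow]
    rw [e1, e2, hhk, mul_comm]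
    ring_nf
  · rw [hG k h3, mul_zero, zero_mul]
end

section
/- Let g, f1, f2, f3 be formal power series over ℚ with g supported on multiples of 3 and each fᵢ supported on residue 1 mod 3 with zero constant coefficient. Then the row sums of the triple Riordan matrix have generating function g*(1 + f1 + f1*f2)*(1 - f1*f2*f3)⁻¹: for every natural number n, ∑_{k=0}^{n} a(n,k) = coeff n (g * (1 + f1 + f1*f2) * (1 - f1*f2*f3)⁻¹), where a(n,k) = coeff n (g * f1^⌊(k+2)/3⌋ * f2^⌊(k+1)/3⌋ * f3^⌊k/3⌋). -/
open PowerSeries Finset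

private lemma sum_range_three_mul (f : ℕ → ℚ) (N : ℕ) :
    ∑ k ∈ range (3 * N), f k = ∑ m ∈ range N, (f (3 * m) + f (3 * m + 1) + f (3 * m + 2)) := by
  induction N with
  | zero => simp
  | succ N ih =>
    have h3 : 3 * (N + 1) = (3 * N + 1) + 1 + 1 := by ring
    rw [h3, Finset.sum_range_succ, Finset.sum_range_succ, Finset.sum_range_succ,
      Finset.sum_range_succ, ih]
    ring

theorem tripleRiordan_row_sums
    (g f1 f2 f3 : PowerSeries ℚ)
    (hg : ∀ n : ℕ, n % 3 ≠ 0 → coeff n g = 0)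
    (hf1 : ∀ n : ℕ, n % 3 ≠ 1 → coeff n f1 = 0) (hf1' : coeff 0 f1 = 0)
    (hf2 : ∀ n : ℕ, n % 3 ≠ 1 → coeff n f2 = 0) (hf2' : coeff 0 f2 = 0)
    (hf3 : ∀ n : ℕ, n % 3 ≠ 1 → coeff n f3 = 0) (hf3' : coeff 0 f3 = 0) :
    ∀ n : ℕ,
      ∑ k ∈ range (n + 1), tripleEntry g f1 f2 f3 n k =
        coeff n (g * (1 + f1 + f1 * f2) * (1 - f1 * f2 * f3)⁻¹) := by
  intro n
  set P : PowerSeries ℚ := f1 * f2 * f3 with hPdef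
  have hX1 : (X : PowerSeries ℚ) ∣ f1 := X_dvd_iff.mpr (by rwa [← coeff_zero_eq_constantCoeff])
  have hX2 : (X : PowerSeries ℚ) ∣ f2 := X_dvd_iff.mpr (by rwa [← coeff_zero_eq_constantCoeff])
  have hX3 : (X : PowerSeries ℚ) ∣ f3 := X_dvd_iff.mpr (by rwa [← coeff_zero_eq_constantCoeff])
  have hXP : (X : PowerSeries ℚ) ∣ P := hX1.trans ⟨f2 * f3, by ring⟩
  -- vanishing lemma
  have hvan : ∀ a b c : ℕ, n < a + b + c → coeff n (g * f1 ^ a * f2 ^ b * f3 ^ c) = 0 := by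
    intro a b c h
    have hdvd : (X : PowerSeries ℚ) ^ (a + b + c) ∣ g * f1 ^ a * f2 ^ b * f3 ^ c := by
      have h1 : (X : PowerSeries ℚ) ^ a ∣ f1 ^ a := pow_dvd_pow_of_dvd hX1 a
      have h2 : (X : PowerSeries ℚ) ^ b ∣ f2 ^ b := pow_dvd_pow_of_dvd hX2 b
      have h3 : (X : PowerSeries ℚ) ^ c ∣ f3 ^ c := pow_dvd_pow_of_dvd hX3 c
      have : (X : PowerSeries ℚ) ^ a * X ^ b * X ^ c ∣ f1 ^ a * f2 ^ b * f3 ^ c :=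
        mul_dvd_mul (mul_dvd_mul h1 h2) h3
      have hd : (X : PowerSeries ℚ) ^ (a + b + c) ∣ f1 ^ a * f2 ^ b * f3 ^ c := by
        rw [pow_add, pow_add]; exact this
      exact hd.trans ⟨g, by ring⟩
    exact X_pow_dvd_iff.mp hdvd n h
  -- inverse facts
  have hC : constantCoeff (1 - P) ≠ 0 := by
    have : constantCoeff P = 0 := by
      rcases hXP with ⟨q, hq⟩
      simp [hq]
    simp [map_sub, this]
  have hinv : (1 - P) * (1 - P)⁻¹ = 1 := PowerSeries.mul_inv_cancel _ hC
  set S : PowerSeries ℚ := ∑ m ∈ range (n + 1), P ^ m with hSdef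
  have hgeom : (1 - P) * S = 1 - P ^ (n + 1) := by
    have := geom_sum_mul P (n + 1)
    rw [hSdef]
    linear_combination -this
  have hu : (1 - P)⁻¹ = S + P ^ (n + 1) * (1 - P)⁻¹ := by
    linear_combination (-(1 - P)⁻¹) * hgeom + S * hinv
  -- RHS computation
  have hRHS : coeff n (g * (1 + f1 + f1 * f2) * (1 - P)⁻¹) =
      ∑ m ∈ range (n + 1),
        (coeff n (g * P ^ m) + coeff n (g * f1 * P ^ m) + coeff n (g * f1 * f2 * P ^ m)) := by
    rw [hu, mul_add]
    have htail : coeff n (g * (1 + f1 + f1 * f2) * (P ^ (n + 1) * (1 - P)⁻¹)) = 0 := by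
      have hdvd : (X : PowerSeries ℚ) ^ (n + 1) ∣
          g * (1 + f1 + f1 * f2) * (P ^ (n + 1) * (1 - P)⁻¹) := by
        have : (X : PowerSeries ℚ) ^ (n + 1) ∣ P ^ (n + 1) := pow_dvd_pow_of_dvd hXP _
        exact this.trans ⟨g * (1 + f1 + f1 * f2) * (1 - P)⁻¹, by ring⟩
      exact X_pow_dvd_iff.mp hdvd n (Nat.lt_succ_self n)
    rw [map_add, htail, add_zero, hSdef, Finset.mul_sum, map_sum]
    refine Finset.sum_congr rfl fun m _ => ?_
    have : g * (1 + f1 + f1 * f2) * P ^ m =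
        g * P ^ m + g * f1 * P ^ m + g * f1 * f2 * P ^ m := by ring
    rw [this, map_add, map_add]
  rw [hRHS]
  -- extend LHS sum
  have hext : ∑ k ∈ range (n + 1), tripleEntry g f1 f2 f3 n k =
      ∑ k ∈ range (3 * (n + 1)), tripleEntry g f1 f2 f3 n k := by
    apply Finset.sum_subset
    · intro k hk
      rw [Finset.mem_range] at hk ⊢
      omega
    · intro k _ hk
      simp only [Finset.mem_range, not_lt] at hk
      simp only [tripleEntry]
      exact hvan _ _ _ (by omega)
  rw [hext, sum_range_three_mul]
  refine Finset.sum_congr rfl fun m _ => ?_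
  have e0 : (3 * m + 2) / 3 = m := by omega
  have e1 : (3 * m + 1) / 3 = m := by omega
  have e2 : (3 * m) / 3 = m := by omega
  have e3 : (3 * m + 3) / 3 = m + 1 := by omega
  have e4 : (3 * m + 4) / 3 = m + 1 := by omega
  have t0 : tripleEntry g f1 f2 f3 n (3 * m) = coeff n (g * P ^ m) := by
    unfold tripleEntry
    rw [show 3 * m + 2 = 3 * m + 2 from rfl, e0, e1, e2]
    congr 1
    rw [hPdef]; ring
  have t1 : tripleEntry g f1 f2 f3 n (3 * m + 1) = coeff n (g * f1 * P ^ m) := by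
    unfold tripleEntry
    rw [show 3 * m + 1 + 2 = 3 * m + 3 from by ring, show 3 * m + 1 + 1 = 3 * m + 2 from by ring,
      e3, e0, e1]
    congr 1
    rw [hPdef]; ring
  have t2 : tripleEntry g f1 f2 f3 n (3 * m + 2) = coeff n (g * f1 * f2 * P ^ m) := by
    unfold tripleEntry
    rw [show 3 * m + 2 + 2 = 3 * m + 4 from by ring, show 3 * m + 2 + 1 = 3 * m + 3 from by ring,
      e4, e3, e0]
    congr 1
    rw [hPdef]; ring
  rw [t0, t1, t2]
end

section
/- In PowerSeries ℚ, let g = (1 - X^3)⁻¹, f1 = X*(1 - X^3)⁻¹, f2 = X*(1 + X^3), f3 = X*(1 + X^3)⁻¹. Then the row-sum generating function of the associated triple Riordan matrix satisfies g*(1 + f1 + f1*f2)*(1 - f1*f2*f3)⁻¹ = (1 + X + X^2 - X^3 + X^5) * ((1 - X^3)*(1 - 2*X^3))⁻¹. -/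
open PowerSeries

theorem example1_row_sums_gf :
    ((1 - X ^ 3)⁻¹ : PowerSeries ℚ) *
        (1 + X * (1 - X ^ 3)⁻¹ + X * (1 - X ^ 3)⁻¹ * (X * (1 + X ^ 3))) *
        (1 - X * (1 - X ^ 3)⁻¹ * (X * (1 + X ^ 3)) * (X * (1 + X ^ 3)⁻¹))⁻¹ =
      (1 + X + X ^ 2 - X ^ 3 + X ^ 5) * ((1 - X ^ 3) * (1 - 2 * X ^ 3))⁻¹ := by
  have ca : constantCoeff (1 - X ^ 3 : PowerSeries ℚ) ≠ 0 := by simp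
  have cb : constantCoeff (1 + X ^ 3 : PowerSeries ℚ) ≠ 0 := by simp
  have cc : constantCoeff (1 - 2 * X ^ 3 : PowerSeries ℚ) ≠ 0 := by simp
  have ha : (1 - X ^ 3 : PowerSeries ℚ) * (1 - X ^ 3)⁻¹ = 1 :=
    PowerSeries.mul_inv_cancel _ ca
  have hb : (1 + X ^ 3 : PowerSeries ℚ) * (1 + X ^ 3)⁻¹ = 1 :=
    PowerSeries.mul_inv_cancel _ cb
  have hc : (1 - 2 * X ^ 3 : PowerSeries ℚ) * (1 - 2 * X ^ 3)⁻¹ = 1 :=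
    PowerSeries.mul_inv_cancel _ cc
  have hD : (1 - X * (1 - X ^ 3)⁻¹ * (X * (1 + X ^ 3)) * (X * (1 + X ^ 3)⁻¹) :
      PowerSeries ℚ)⁻¹ = (1 - X ^ 3) * (1 - 2 * X ^ 3)⁻¹ := by
    rw [PowerSeries.inv_eq_iff_mul_eq_one]
    · linear_combination (-X ^ 3 * (1 - 2 * X ^ 3)⁻¹) * ha +
        (-X ^ 3 * (1 - X ^ 3)⁻¹ * (1 - X ^ 3) * (1 - 2 * X ^ 3)⁻¹) * hb + hc
    · simp
  have hac : ((1 - X ^ 3 : PowerSeries ℚ) * (1 - 2 * X ^ 3))⁻¹ =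
      (1 - X ^ 3)⁻¹ * (1 - 2 * X ^ 3)⁻¹ := by
    rw [PowerSeries.inv_eq_iff_mul_eq_one]
    · linear_combination ((1 - 2 * X ^ 3) * (1 - 2 * X ^ 3)⁻¹) * ha + hc
    · simp
  rw [hD, hac]
  linear_combination ((X * (1 - X ^ 3)⁻¹ + X ^ 2 * (1 - X ^ 3)⁻¹ * (1 + X ^ 3)) *
    (1 - 2 * X ^ 3)⁻¹) * ha
end

section
/- Let s = (1 + X + X^2 - X^3 + X^5) * ((1 - X^3)*(1 - 2*X^3))⁻¹ in PowerSeries ℚ. Then for every natural number n: coeff (3n) s = 2^n, coeff (3n+1) s = 2^{n+1} - 1, and coeff (3n+2) s = 3*2^n - 2. That is, s is the interleaving of the sequences 2^n, 2^{n+1}-1, and 3·2^n-2. -/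
open PowerSeries

theorem example1_row_sums_interleaving :
    ∀ n : ℕ,
      coeff (R := ℚ) (3 * n)
          ((1 + X + X ^ 2 - X ^ 3 + X ^ 5) * ((1 - X ^ 3) * (1 - 2 * X ^ 3))⁻¹) =
        2 ^ n ∧
      coeff (R := ℚ) (3 * n + 1)
          ((1 + X + X ^ 2 - X ^ 3 + X ^ 5) * ((1 - X ^ 3) * (1 - 2 * X ^ 3))⁻¹) =
        2 ^ (n + 1) - 1 ∧
      coeff (R := ℚ) (3 * n + 2)
          ((1 + X + X ^ 2 - X ^ 3 + X ^ 5) * ((1 - X ^ 3) * (1 - 2 * X ^ 3))⁻¹) =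
        3 * 2 ^ n - 2 := by
  set s : PowerSeries ℚ := (1 + X + X ^ 2 - X ^ 3 + X ^ 5) * ((1 - X ^ 3) * (1 - 2 * X ^ 3))⁻¹ with hs_def
  have hunit : (((1 - X ^ 3) * (1 - 2 * X ^ 3) : PowerSeries ℚ))⁻¹ * ((1 - X ^ 3) * (1 - 2 * X ^ 3)) = 1 := by
    apply PowerSeries.inv_mul_cancel
    simp
  have h1 : s * ((1 - X ^ 3) * (1 - 2 * X ^ 3)) = 1 + X + X ^ 2 - X ^ 3 + X ^ 5 := by
    rw [hs_def, mul_assoc, hunit, mul_one]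
  have h : s = (1 + X + X ^ 2 - X ^ 3 + X ^ 5) + (C (R := ℚ) 3) * (s * X ^ 3) - (C (R := ℚ) 2) * (s * X ^ 6) := by
    have hC3 : (C (R := ℚ) 3) = (3 : PowerSeries ℚ) := by rfl
    have hC2 : (C (R := ℚ) 2) = (2 : PowerSeries ℚ) := by rfl
    rw [hC3, hC2]
    linear_combination h1
  have hco : ∀ k : ℕ, coeff (R := ℚ) k s =
      coeff (R := ℚ) k (1 + X + X ^ 2 - X ^ 3 + X ^ 5 : PowerSeries ℚ)
      + 3 * (if 3 ≤ k then coeff (R := ℚ) (k - 3) s else 0)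
      - 2 * (if 6 ≤ k then coeff (R := ℚ) (k - 6) s else 0) := by
    intro k
    conv_lhs => rw [h]
    rw [map_sub, map_add, coeff_C_mul, coeff_C_mul, coeff_mul_X_pow', coeff_mul_X_pow']
  intro n
  induction n using Nat.twoStepInduction with
  | zero =>
    refine ⟨?_, ?_, ?_⟩
    · rw [show 3 * 0 = 0 by norm_num, hco 0]; norm_num [coeff_X, coeff_X_pow]
    · rw [show 3 * 0 + 1 = 1 by norm_num, hco 1]; norm_num [coeff_X, coeff_X_pow]
    · rw [show 3 * 0 + 2 = 2 by norm_num, hco 2]; norm_num [coeff_X, coeff_X_pow]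
  | one =>
    have h0 : coeff (R := ℚ) 0 s = 1 := by rw [hco 0]; norm_num [coeff_X, coeff_X_pow]
    have hh1 : coeff (R := ℚ) 1 s = 1 := by rw [hco 1]; norm_num [coeff_X, coeff_X_pow]
    have h2 : coeff (R := ℚ) 2 s = 1 := by rw [hco 2]; norm_num [coeff_X, coeff_X_pow]
    refine ⟨?_, ?_, ?_⟩
    · rw [show 3 * 1 = 3 by norm_num, hco 3]; norm_num [coeff_X, coeff_X_pow, h0]
    · rw [show 3 * 1 + 1 = 4 by norm_num, hco 4]; norm_num [coeff_X, coeff_X_pow, hh1]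
    · rw [show 3 * 1 + 2 = 5 by norm_num, hco 5]; norm_num [coeff_X, coeff_X_pow, h2]
  | more n ih1 ih =>
    obtain ⟨a0, a1, a2⟩ := ih
    obtain ⟨b0, b1, b2⟩ := ih1
    have hnum : ∀ k : ℕ, 6 ≤ k → coeff (R := ℚ) k (1 + X + X ^ 2 - X ^ 3 + X ^ 5 : PowerSeries ℚ) = 0 := by
      intro k hk
      rw [map_add, map_sub, map_add, map_add, coeff_one, coeff_X, coeff_X_pow, coeff_X_pow,
        coeff_X_pow, if_neg (by omega), if_neg (by omega), if_neg (by omega), if_neg (by omega),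
        if_neg (by omega)]
      ring
    refine ⟨?_, ?_, ?_⟩
    · rw [hco (3 * (n + 2))]
      rw [if_pos (by omega), if_pos (by omega),
        show 3 * (n + 2) - 3 = 3 * (n + 1) by omega, show 3 * (n + 2) - 6 = 3 * n by omega,
        hnum _ (by omega), b0, a0]
      ring
    · rw [hco (3 * (n + 2) + 1)]
      rw [if_pos (by omega), if_pos (by omega),
        show 3 * (n + 2) + 1 - 3 = 3 * (n + 1) + 1 by omega, show 3 * (n + 2) + 1 - 6 = 3 * n + 1 by omega,
        hnum _ (by omega), b1, a1]
      ring
    · rw [hco (3 * (n + 2) + 2)]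
      rw [if_pos (by omega), if_pos (by omega),
        show 3 * (n + 2) + 2 - 3 = 3 * (n + 1) + 2 by omega, show 3 * (n + 2) + 2 - 6 = 3 * n + 2 by omega,
        hnum _ (by omega), b2, a2]
      ring
end

section
/- In PowerSeries ℚ, let g = (1 - X^3)⁻¹, f1 = X*(1 - X^3)⁻¹, f2 = X*(1 + X^3), f3 = X*(1 + X^3)⁻¹, and let h be a power series supported on residue 1 mod 3 with h^3 = X^3*(1 - X^3)⁻¹ = f1*f2*f3. Let G = (1 + X^3)⁻¹, F1 = X*(1 + X^3)⁻¹, F2 = X*(1 + X^3)*(1 + 2*X^3)⁻¹, F3 = X*(1 + 2*X^3)*(1 + X^3)⁻¹. Then g * subst h G = 1 and fᵢ * subst h Fᵢ = X*h for i = 1,2,3; that is, (G, F1, F2, F3) is the inverse of (g, f1, f2, f3) in the triple Riordan group. -/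
open PowerSeries Finset

lemma coeff_subst' (h F : PowerSeries ℚ) (n : ℕ) :
    coeff n (_root_.subst h F) = ∑ k ∈ range (n + 1), coeff k F * coeff n (h ^ k) := by
  simp [_root_.subst]

lemma coeff_h_pow_eq_zero {h : PowerSeries ℚ} (hc : constantCoeff h = 0)
    {n k : ℕ} (hk : n < k) : coeff n (h ^ k) = 0 := by
  have hx : (X : PowerSeries ℚ) ∣ h := X_dvd_iff.mpr hc
  have hd : (X : PowerSeries ℚ) ^ k ∣ h ^ k := pow_dvd_pow_of_dvd hx k
  exact (X_pow_dvd_iff.mp hd) n hk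

lemma coeff_aeval {h : PowerSeries ℚ} (hc : constantCoeff h = 0)
    (p : Polynomial ℚ) (n : ℕ) :
    coeff n (Polynomial.aeval h p) = ∑ k ∈ range (n + 1), p.coeff k * coeff n (h ^ k) := by
  have hdeg : p.natDegree < max (p.natDegree + 1) (n + 1) :=
    lt_of_lt_of_le (Nat.lt_succ_self _) (le_max_left _ _)
  rw [Polynomial.aeval_eq_sum_range' hdeg h, map_sum]
  have hco : ∀ i : ℕ, coeff n (p.coeff i • h ^ i) = p.coeff i * coeff n (h ^ i) := by
    intro i
    rw [LinearMap.map_smul, smul_eq_mul]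
  simp_rw [hco]
  symm
  apply Finset.sum_subset (Finset.range_subset_range.mpr (le_max_right _ _))
  intro x hx hnx
  simp only [Finset.mem_range] at hx hnx
  rw [coeff_h_pow_eq_zero hc (by omega), mul_zero]

lemma coeff_aeval_trunc {h : PowerSeries ℚ} (hc : constantCoeff h = 0)
    (F : PowerSeries ℚ) {n N : ℕ} (hn : n < N) :
    coeff n (Polynomial.aeval h (trunc N F)) = coeff n (_root_.subst h F) := by
  rw [coeff_aeval hc, coeff_subst']
  apply Finset.sum_congr rfl
  intro k hk
  simp only [Finset.mem_range] at hk
  rw [coeff_trunc, if_pos (by omega)]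

lemma subst_mul_s11 {h : PowerSeries ℚ} (hc : constantCoeff h = 0)
    (F G : PowerSeries ℚ) : _root_.subst h (F * G) = _root_.subst h F * _root_.subst h G := by
  ext n
  have hP : ∀ k ≤ n, (trunc (n + 1) F * trunc (n + 1) G).coeff k = coeff k (F * G) := by
    intro k hk
    rw [Polynomial.coeff_mul, PowerSeries.coeff_mul]
    apply Finset.sum_congr rfl
    intro p hp
    rw [Finset.HasAntidiagonal.mem_antidiagonal] at hp
    rw [coeff_trunc, coeff_trunc, if_pos (by omega), if_pos (by omega)]
  calc coeff n (_root_.subst h (F * G))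
      = ∑ k ∈ range (n + 1), coeff k (F * G) * coeff n (h ^ k) := coeff_subst' h _ n
    _ = ∑ k ∈ range (n + 1),
          (trunc (n + 1) F * trunc (n + 1) G).coeff k * coeff n (h ^ k) := by
        apply Finset.sum_congr rfl
        intro k hk
        rw [hP k (by simpa using Nat.lt_succ_iff.mp (Finset.mem_range.mp hk))]
    _ = coeff n (Polynomial.aeval h (trunc (n + 1) F * trunc (n + 1) G)) :=
        (coeff_aeval hc _ n).symm
    _ = coeff n (Polynomial.aeval h (trunc (n + 1) F) *
          Polynomial.aeval h (trunc (n + 1) G)) := by rw [map_mul]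
    _ = coeff n (_root_.subst h F * _root_.subst h G) := by
        rw [PowerSeries.coeff_mul, PowerSeries.coeff_mul]
        apply Finset.sum_congr rfl
        intro p hp
        rw [Finset.HasAntidiagonal.mem_antidiagonal] at hp
        rw [coeff_aeval_trunc hc F (by omega), coeff_aeval_trunc hc G (by omega)]

lemma subst_one_s11 (h : PowerSeries ℚ) : _root_.subst h 1 = 1 := by
  ext n
  rw [coeff_subst']
  rw [Finset.sum_eq_single 0]
  · simp
  · intro k _ hk
    rw [PowerSeries.coeff_one, if_neg hk, zero_mul]
  · intro habs
    simp at habs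

lemma subst_add (h F G : PowerSeries ℚ) : _root_.subst h (F + G) = _root_.subst h F + _root_.subst h G := by
  ext n
  simp [coeff_subst', add_mul, Finset.sum_add_distrib]

lemma subst_X {h : PowerSeries ℚ} (hc : constantCoeff h = 0) : _root_.subst h X = h := by
  ext n
  rw [coeff_subst']
  rcases Nat.eq_zero_or_pos n with hn | hn
  · subst hn
    simpa using hc.symm
  · rw [Finset.sum_eq_single 1]
    · simp
    · intro k _ hk
      rw [PowerSeries.coeff_X, if_neg hk, zero_mul]
    · intro habs
      simp at habs
      omega

theorem example1_inverse
    (h : PowerSeries ℚ)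
    (hsupp : ∀ n : ℕ, n % 3 ≠ 1 → coeff n h = 0)
    (hh3 : h ^ 3 = X ^ 3 * ((1 : PowerSeries ℚ) - X ^ 3)⁻¹) :
    ((1 - X ^ 3)⁻¹ : PowerSeries ℚ) * _root_.subst h ((1 + X ^ 3)⁻¹) = 1 ∧
      (X * (1 - X ^ 3)⁻¹ : PowerSeries ℚ) * _root_.subst h (X * (1 + X ^ 3)⁻¹) = X * h ∧
      (X * (1 + X ^ 3) : PowerSeries ℚ) *
          _root_.subst h (X * (1 + X ^ 3) * (1 + 2 * X ^ 3)⁻¹) = X * h ∧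
      (X * (1 + X ^ 3)⁻¹ : PowerSeries ℚ) *
          _root_.subst h (X * (1 + 2 * X ^ 3) * (1 + X ^ 3)⁻¹) = X * h := by
  have hc : constantCoeff h = 0 := by
    rw [← coeff_zero_eq_constantCoeff_apply]
    exact hsupp 0 (by norm_num)
  set u : PowerSeries ℚ := 1 - X ^ 3 with hu_def
  set v : PowerSeries ℚ := 1 + X ^ 3 with hv_def
  set w : PowerSeries ℚ := 1 + 2 * X ^ 3 with hw_def
  have cu : constantCoeff u ≠ 0 := by
    simp [hu_def, map_pow]
  have cv : constantCoeff v ≠ 0 := by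
    simp [hv_def, map_pow]
  have cw : constantCoeff w ≠ 0 := by
    simp [hw_def, map_pow]
  have hu : u * u⁻¹ = 1 := PowerSeries.mul_inv_cancel u cu
  have hv : v * v⁻¹ = 1 := PowerSeries.mul_inv_cancel v cv
  have hw : w * w⁻¹ = 1 := PowerSeries.mul_inv_cancel w cw
  -- _root_.subst h X^3 = h^3
  have sX : _root_.subst h X = h := subst_X hc
  have sX3 : _root_.subst h (X ^ 3) = h ^ 3 := by
    have : (X : PowerSeries ℚ) ^ 3 = X * (X * X) := by ring
    rw [this, subst_mul_s11 hc, subst_mul_s11 hc, sX]; ring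
  -- S(v) = u⁻¹
  have sv : _root_.subst h v = u⁻¹ := by
    rw [hv_def, subst_add, subst_one_s11, sX3, hh3]
    calc (1 : PowerSeries ℚ) + X ^ 3 * u⁻¹ = (u + X ^ 3) * u⁻¹ := by
          rw [add_mul, hu]
      _ = u⁻¹ := by rw [hu_def]; ring_nf
  -- S(w) = v * u⁻¹
  have sw : _root_.subst h w = v * u⁻¹ := by
    have s2 : _root_.subst h (2 : PowerSeries ℚ) = 2 := by
      have : (2 : PowerSeries ℚ) = 1 + 1 := by norm_num
      rw [this, subst_add, subst_one_s11]
    rw [hw_def, subst_add, subst_one_s11, subst_mul_s11 hc, s2, sX3, hh3]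
    linear_combination (-1 : PowerSeries ℚ) * hu + u⁻¹ * hu_def - u⁻¹ * hv_def
  -- key: u⁻¹ * S(v⁻¹) = 1
  have key1 : u⁻¹ * _root_.subst h v⁻¹ = 1 := by
    have : _root_.subst h (v * v⁻¹) = 1 := by rw [hv, subst_one_s11]
    rw [subst_mul_s11 hc, sv] at this
    exact this
  -- key: (v * u⁻¹) * S(w⁻¹) = 1
  have key2 : v * u⁻¹ * _root_.subst h w⁻¹ = 1 := by
    have : _root_.subst h (w * w⁻¹) = 1 := by rw [hw, subst_one_s11]
    rw [subst_mul_s11 hc, sw] at this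
    exact this
  refine ⟨key1, ?_, ?_, ?_⟩
  · rw [subst_mul_s11 hc, sX]
    linear_combination (X * h) * key1
  · rw [subst_mul_s11 hc, subst_mul_s11 hc, sX, sv]
    linear_combination (X * h) * key2
  · rw [subst_mul_s11 hc, subst_mul_s11 hc, sX, sw]
    linear_combination (X * h * v⁻¹ * v) * key1 + (X * h) * hv
end

section
/- Let t = (1 + X)*(1 + X + X^2)*(1 - X - X^2)⁻¹ in PowerSeries ℚ. Then for every natural number n, coeff n t = 2*Fib(n+2) - (if n ≤ 1 then 1 else 0), where Fib is the Fibonacci sequence with Fib(1) = Fib(2) = 1. That is, t is the generating function of the sequence 2F_{n+2} - binomial(1,n), which begins 1, 3, 6, 10, 16, 26, …. -/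
open PowerSeries

noncomputable def sAux : PowerSeries ℚ :=
  mk fun n => 2 * (Nat.fib (n + 2) : ℚ) - (if n ≤ 1 then 1 else 0)

lemma sAux_key : sAux * ((1 : PowerSeries ℚ) - X - X ^ 2) = (1 + X) * (1 + X + X ^ 2) := by
  ext n
  have h1 : (1 + X) * (1 + X + X ^ 2) =
      (1 : PowerSeries ℚ) + C (2 : ℚ) * X ^ 1 + C (2 : ℚ) * X ^ 2 + X ^ 3 := by
    simp only [map_ofNat]
    ring
  rw [h1, mul_sub, mul_sub, mul_one]
  rw [show (sAux * X) = sAux * X ^ 1 by ring]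
  simp only [map_sub, map_add, coeff_mul_X_pow', coeff_C_mul, coeff_one, coeff_X_pow, sAux, coeff_mk]
  rcases n with _ | _ | _ | _ | n
  · norm_num
  · norm_num [coeff_one, PowerSeries.coeff_X_pow]
  · norm_num [coeff_one, PowerSeries.coeff_X_pow]
  · norm_num [coeff_one, PowerSeries.coeff_X_pow]
  · norm_num [coeff_one, PowerSeries.coeff_X_pow, coeff_C]
    rw [show n + 1 + 1 + 1 + 1 + 2 = n + 1 + 1 + 1 + 1 + 1 + 1 from by ring, Nat.fib_add_two]
    push_cast
    ring_nf
    rw [if_neg (by omega)]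

theorem example2_aerated_sequence :
    ∀ n : ℕ,
      coeff n ((1 + X) * (1 + X + X ^ 2) * ((1 : PowerSeries ℚ) - X - X ^ 2)⁻¹) =
        2 * (Nat.fib (n + 2) : ℚ) - (if n ≤ 1 then 1 else 0) := by
  intro n
  have hc : constantCoeff ((1 : PowerSeries ℚ) - X - X ^ 2) ≠ 0 := by
    simp [map_sub, constantCoeff_X]
  have : (1 + X) * (1 + X + X ^ 2) * ((1 : PowerSeries ℚ) - X - X ^ 2)⁻¹ = sAux := by
    rw [← sAux_key, mul_assoc, PowerSeries.mul_inv_cancel _ hc, mul_one]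
  rw [this, sAux, coeff_mk]
end

section
/- In PowerSeries ℚ, let C be the Catalan generating function, characterized by C = 1 + X*C^2 with constant coefficient 1, and set D = subst (-X^3) C (the series c(-x^3)). Let g = 1 + X^3, f1 = X*(1 + X^3), f2 = X*(1 - X^3)⁻¹, f3 = X*(1 - X^3), and let h be a power series supported on residue 1 mod 3 with h^3 = X^3*(1 + X^3) = f1*f2*f3. Let G = D, F1 = X*D, F2 = X*(1 - X^3*D), F3 = X*(1 - X^3*D)⁻¹. Then g * subst h G = 1 and fᵢ * subst h Fᵢ = X*h for i = 1,2,3; that is, (c(-x^3), x c(-x^3), x(1 - x^3 c(-x^3)), x/(1 - x^3 c(-x^3))) is the inverse of (g, f1, f2, f3) in the triple Riordan group. -/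
open PowerSeries Finset

namespace SubstAux

variable {h : PowerSeries ℚ}

lemma coeff_pow_eq_zero (hh0 : coeff 0 h = 0) {n k : ℕ} (hnk : n < k) :
    coeff n (h ^ k) = 0 := by
  have hd : (X : PowerSeries ℚ) ∣ h := X_dvd_iff.mpr (by simpa using hh0)
  have hdk : (X : PowerSeries ℚ) ^ k ∣ h ^ k := pow_dvd_pow_of_dvd hd k
  exact (X_pow_dvd_iff.mp hdk) n hnk

lemma coeff_aeval (hh0 : coeff 0 h = 0) (P : Polynomial ℚ) (n : ℕ) :
    coeff n (Polynomial.aeval h P) = ∑ k ∈ range (n + 1), P.coeff k * coeff n (h ^ k) := by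
  classical
  have hdeg : P.natDegree < max (n + 1) (P.natDegree + 1) :=
    lt_of_lt_of_le (Nat.lt_succ_self _) (le_max_right _ _)
  rw [Polynomial.aeval_eq_sum_range' hdeg, map_sum]
  have h1 : ∀ k ∈ range (max (n + 1) (P.natDegree + 1)),
      coeff n (P.coeff k • h ^ k) = P.coeff k * coeff n (h ^ k) := by
    intro k _; rw [coeff_smul, smul_eq_mul]
  rw [Finset.sum_congr rfl h1]
  symm
  apply Finset.sum_subset (Finset.range_subset_range.mpr (le_max_left _ _))
  intro k _ hk2
  have hnk : n < k := by
    by_contra hle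
    exact hk2 (Finset.mem_range.mpr (Nat.lt_succ_of_le (not_lt.mp hle)))
  rw [coeff_pow_eq_zero hh0 hnk, mul_zero]

lemma coeff_subst_trunc (hh0 : coeff 0 h = 0) (F : PowerSeries ℚ) {n m : ℕ} (hnm : n < m) :
    coeff n (_root_.subst h F) = coeff n (Polynomial.aeval h (trunc m F)) := by
  rw [coeff_aeval hh0, _root_.subst, coeff_mk]
  apply Finset.sum_congr rfl
  intro k hk
  rw [coeff_trunc, if_pos (lt_of_lt_of_le (Finset.mem_range.mp hk) hnm)]

lemma subst_mul (hh0 : coeff 0 h = 0) (F G : PowerSeries ℚ) :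
    _root_.subst h (F * G) = _root_.subst h F * _root_.subst h G := by
  ext n
  have key : coeff n (_root_.subst h (F * G)) =
      coeff n (Polynomial.aeval h (trunc (n + 1) F) * Polynomial.aeval h (trunc (n + 1) G)) := by
    rw [← map_mul, coeff_aeval hh0, _root_.subst, coeff_mk]
    apply Finset.sum_congr rfl
    intro k hk
    rw [coeff_mul_eq_coeff_trunc_mul_trunc F G (Finset.mem_range.mp hk), ← Polynomial.coe_mul,
        Polynomial.coeff_coe]
  rw [key, PowerSeries.coeff_mul, PowerSeries.coeff_mul]
  apply Finset.sum_congr rfl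
  intro p hp
  rw [← coeff_subst_trunc hh0 F (Nat.lt_succ_of_le (Finset.HasAntidiagonal.antidiagonal.fst_le hp)),
      ← coeff_subst_trunc hh0 G (Nat.lt_succ_of_le (Finset.HasAntidiagonal.antidiagonal.snd_le hp))]

lemma subst_one : _root_.subst h 1 = 1 := by
  ext n
  simp [_root_.subst, coeff_one]

lemma subst_zero : _root_.subst h 0 = 0 := by
  ext n; simp [_root_.subst]

lemma subst_add (F G : PowerSeries ℚ) : _root_.subst h (F + G) = _root_.subst h F + _root_.subst h G := by
  ext n
  simp [_root_.subst, add_mul, Finset.sum_add_distrib]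

noncomputable def substHom (h : PowerSeries ℚ) (hh0 : coeff 0 h = 0) :
    PowerSeries ℚ →+* PowerSeries ℚ where
  toFun := _root_.subst h
  map_one' := subst_one
  map_mul' := subst_mul hh0
  map_zero' := subst_zero
  map_add' := subst_add

@[simp] lemma substHom_apply (hh0 : coeff 0 h = 0) (F : PowerSeries ℚ) :
    substHom h hh0 F = _root_.subst h F := rfl

lemma subst_X (hh0 : coeff 0 h = 0) : _root_.subst h X = h := by
  ext n
  rw [_root_.subst, coeff_mk]
  rcases n with _ | m
  · simp [hh0]
  · rw [Finset.sum_eq_single 1]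
    · simp
    · intro k _ hk1; simp [PowerSeries.coeff_X, hk1]
    · intro hmem
      exact absurd (Finset.mem_range.mpr (Nat.succ_lt_succ (Nat.succ_pos m))) hmem

end SubstAux

open SubstAux

theorem example2_inverse
    (C : PowerSeries ℚ)
    (hC : C = 1 + X * C ^ 2) (hC0 : coeff 0 C = 1)
    (h : PowerSeries ℚ)
    (hsupp : ∀ n : ℕ, n % 3 ≠ 1 → coeff n h = 0)
    (hh3 : h ^ 3 = X ^ 3 * (1 + X ^ 3)) :
    ((1 + X ^ 3 : PowerSeries ℚ)) * _root_.subst h (_root_.subst (-X ^ 3) C) = 1 ∧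
      (X * (1 + X ^ 3) : PowerSeries ℚ) * _root_.subst h (X * _root_.subst (-X ^ 3) C) = X * h ∧
      (X * (1 - X ^ 3)⁻¹ : PowerSeries ℚ) *
          _root_.subst h (X * (1 - X ^ 3 * _root_.subst (-X ^ 3) C)) = X * h ∧
      (X * (1 - X ^ 3) : PowerSeries ℚ) *
          _root_.subst h (X * (1 - X ^ 3 * _root_.subst (-X ^ 3) C)⁻¹) = X * h := by
  have hh0 : coeff 0 h = 0 := hsupp 0 (by norm_num)
  have hX0 : coeff 0 (-X ^ 3 : PowerSeries ℚ) = 0 := by simp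
  set φ := substHom h hh0 with hφ
  set ψ := substHom (-X ^ 3 : PowerSeries ℚ) hX0 with hψ
  set S := _root_.subst (-X ^ 3) C with hSdef
  set E := _root_.subst h S with hEdef
  -- functional equation for S
  have hS : S = 1 + (-X ^ 3) * S ^ 2 := by
    have h1 := congrArg ψ hC
    simpa [hψ, map_add, map_mul, map_pow, map_one, subst_X hX0, ← hSdef] using h1
  -- functional equation for E
  have hE : E = 1 + (-(h ^ 3)) * E ^ 2 := by
    have h1 := congrArg φ hS
    simpa [hφ, map_add, map_mul, map_pow, map_one, map_neg, subst_X hh0, ← hEdef] using h1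
  -- key identity
  have heq : ((1 + X ^ 3) * E - 1) * (X ^ 3 * ((1 + X ^ 3) * E) + 1 + X ^ 3) = 0 := by
    linear_combination (1 + X ^ 3 : PowerSeries ℚ) * hE - (1 + X ^ 3) * E ^ 2 * hh3
  have hne : (X ^ 3 * ((1 + X ^ 3) * E) + 1 + X ^ 3 : PowerSeries ℚ) ≠ 0 := by
    intro h0
    have := congrArg (constantCoeff) h0
    simp [map_add, map_mul, map_pow, constantCoeff_X] at this
  have hu : (1 + X ^ 3 : PowerSeries ℚ) * E = 1 := by
    rcases mul_eq_zero.mp heq with h1 | h1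
    · exact sub_eq_zero.mp h1
    · exact absurd h1 hne
  have h3E : h ^ 3 * E = X ^ 3 := by
    linear_combination E * hh3 + X ^ 3 * hu
  refine ⟨hu, ?_, ?_, ?_⟩
  · have : _root_.subst h (X * S) = h * E := by
      have := map_mul φ X S
      simpa [hφ, subst_X hh0, ← hEdef] using this
    rw [this]
    linear_combination (X * h) * hu
  · have hval : _root_.subst h (X * (1 - X ^ 3 * S)) = h * (1 - h ^ 3 * E) := by
      have := congrArg φ (rfl : X * (1 - X ^ 3 * S) = X * (1 - X ^ 3 * S))
      calc _root_.subst h (X * (1 - X ^ 3 * S)) = φ (X * (1 - X ^ 3 * S)) := rfl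
        _ = φ X * (1 - φ X ^ 3 * φ S) := by
            rw [map_mul, map_sub, map_one, map_mul, map_pow]
        _ = h * (1 - h ^ 3 * E) := by simp only [hφ, substHom_apply, subst_X hh0, ← hEdef]
    have hinv : (1 - X ^ 3 : PowerSeries ℚ)⁻¹ * (1 - X ^ 3) = 1 :=
      PowerSeries.inv_mul_cancel _ (by simp [map_sub, map_pow, constantCoeff_X])
    rw [hval, h3E]
    linear_combination (X * h) * hinv
  · have hA0 : constantCoeff (1 - X ^ 3 * S) ≠ 0 := by
      simp [map_sub, map_mul, map_pow, constantCoeff_X]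
    have hAinv : (1 - X ^ 3 * S) * (1 - X ^ 3 * S)⁻¹ = 1 :=
      PowerSeries.mul_inv_cancel _ hA0
    have hfA : _root_.subst h (1 - X ^ 3 * S) = 1 - X ^ 3 := by
      calc _root_.subst h (1 - X ^ 3 * S) = φ (1 - X ^ 3 * S) := rfl
        _ = 1 - φ X ^ 3 * φ S := by rw [map_sub, map_one, map_mul, map_pow]
        _ = 1 - h ^ 3 * E := by simp only [hφ, substHom_apply, subst_X hh0, ← hEdef]
        _ = 1 - X ^ 3 := by rw [h3E]
    have hkey : (1 - X ^ 3) * _root_.subst h ((1 - X ^ 3 * S)⁻¹) = 1 := by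
      have := congrArg φ hAinv
      rw [map_mul, map_one] at this
      calc (1 - X ^ 3) * _root_.subst h ((1 - X ^ 3 * S)⁻¹)
          = _root_.subst h (1 - X ^ 3 * S) * _root_.subst h ((1 - X ^ 3 * S)⁻¹) := by rw [hfA]
        _ = 1 := this
    have hval : _root_.subst h (X * (1 - X ^ 3 * S)⁻¹) = h * _root_.subst h ((1 - X ^ 3 * S)⁻¹) := by
      calc _root_.subst h (X * (1 - X ^ 3 * S)⁻¹) = φ (X * (1 - X ^ 3 * S)⁻¹) := rfl
        _ = φ X * φ ((1 - X ^ 3 * S)⁻¹) := map_mul φ _ _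
        _ = h * _root_.subst h ((1 - X ^ 3 * S)⁻¹) := by simp only [hφ, substHom_apply, subst_X hh0]
    rw [hval]
    linear_combination (X * h) * hkey
end

section
/- (Quadruple Riordan group: triangularity and mod-4 checkerboard.) Let g, f1, f2, f3, f4 be formal power series over ℚ such that coeff n g = 0 whenever n % 4 ≠ 0 with constant coefficient of g equal to 1, and for each i, coeff n fᵢ = 0 whenever n % 4 ≠ 1 with coefficient of X in fᵢ equal to 1. Define b(n,k) = coeff n (g * f1^⌊(k+3)/4⌋ * f2^⌊(k+2)/4⌋ * f3^⌊(k+1)/4⌋ * f4^⌊k/4⌋). Then b(n,k) = 0 whenever k > n, b(n,n) = 1 for all n, and b(n,k) = 0 whenever n % 4 ≠ k % 4. -/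
open PowerSeries Finset

/-- A series is `Good a` if its coefficients vanish below `a`, equal `1` at `a`,
and vanish off the residue class of `a` mod 4. -/
def QuadGood (a : ℕ) (f : PowerSeries ℚ) : Prop :=
  (∀ n, n < a → coeff n f = 0) ∧ coeff a f = 1 ∧
    (∀ n, n % 4 ≠ a % 4 → coeff n f = 0)

lemma QuadGood.mul {a b : ℕ} {f h : PowerSeries ℚ} (hf : QuadGood a f)
    (hh : QuadGood b h) : QuadGood (a + b) (f * h) := by
  obtain ⟨hf1, hf2, hf3⟩ := hf
  obtain ⟨hh1, hh2, hh3⟩ := hh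
  refine ⟨?_, ?_, ?_⟩
  · intro n hn
    rw [coeff_mul]
    apply Finset.sum_eq_zero
    rintro ⟨i, j⟩ hij
    rw [Finset.HasAntidiagonal.mem_antidiagonal] at hij
    rcases lt_or_ge i a with h' | h'
    · simp [hf1 i h']
    · simp [hh1 j (by omega)]
  · rw [coeff_mul, Finset.sum_eq_single (a, b)]
    · simp [hf2, hh2]
    · rintro ⟨i, j⟩ hij hne
      rw [Finset.HasAntidiagonal.mem_antidiagonal] at hij
      rcases lt_trichotomy i a with h' | h' | h'
      · simp [hf1 i h']
      · have : j = b := by omega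
        simp [h', this] at hne
      · simp [hh1 j (by omega)]
    · intro h; exact absurd (Finset.HasAntidiagonal.mem_antidiagonal.mpr (by simp)) h
  · intro n hn
    rw [coeff_mul]
    apply Finset.sum_eq_zero
    rintro ⟨i, j⟩ hij
    rw [Finset.HasAntidiagonal.mem_antidiagonal] at hij
    by_cases hi : i % 4 = a % 4
    · simp [hh3 j (by omega)]
    · simp [hf3 i hi]

lemma QuadGood.pow {a : ℕ} {f : PowerSeries ℚ} (hf : QuadGood a f) (m : ℕ) :
    QuadGood (m * a) (f ^ m) := by
  induction m with
  | zero =>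
      refine ⟨fun n hn => by omega, by simp, fun n hn => ?_⟩
      simp only [Nat.zero_mul, Nat.zero_mod] at hn
      rw [pow_zero, coeff_one]
      simp [show n ≠ 0 by omega]
  | succ m ih =>
      have : (m + 1) * a = m * a + a := by ring
      rw [this, pow_succ]
      exact ih.mul hf

/-- The entry `b(n,k)` of the quadruple Riordan matrix associated to `(g, f1, f2, f3, f4)`. -/
noncomputable def quadEntry (g f1 f2 f3 f4 : PowerSeries ℚ) (n k : ℕ) : ℚ :=
  coeff n (g * f1 ^ ((k + 3) / 4) * f2 ^ ((k + 2) / 4) * f3 ^ ((k + 1) / 4) *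
    f4 ^ (k / 4))

theorem quadrupleRiordan_triangular_checkerboard
    (g f1 f2 f3 f4 : PowerSeries ℚ)
    (hg : ∀ n : ℕ, n % 4 ≠ 0 → coeff n g = 0) (hg0 : coeff 0 g = 1)
    (hf1 : ∀ n : ℕ, n % 4 ≠ 1 → coeff n f1 = 0) (hf1' : coeff 1 f1 = 1)
    (hf2 : ∀ n : ℕ, n % 4 ≠ 1 → coeff n f2 = 0) (hf2' : coeff 1 f2 = 1)
    (hf3 : ∀ n : ℕ, n % 4 ≠ 1 → coeff n f3 = 0) (hf3' : coeff 1 f3 = 1)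
    (hf4 : ∀ n : ℕ, n % 4 ≠ 1 → coeff n f4 = 0) (hf4' : coeff 1 f4 = 1) :
    (∀ n k : ℕ, n < k → quadEntry g f1 f2 f3 f4 n k = 0) ∧
      (∀ n : ℕ, quadEntry g f1 f2 f3 f4 n n = 1) ∧
      (∀ n k : ℕ, n % 4 ≠ k % 4 → quadEntry g f1 f2 f3 f4 n k = 0) := by
  have Hg : QuadGood 0 g := ⟨fun n hn => by omega, hg0, fun n hn => hg n hn⟩
  have H1 : QuadGood 1 f1 := ⟨fun n hn => hf1 n (by omega), hf1', fun n hn => hf1 n (by omega)⟩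
  have H2 : QuadGood 1 f2 := ⟨fun n hn => hf2 n (by omega), hf2', fun n hn => hf2 n (by omega)⟩
  have H3 : QuadGood 1 f3 := ⟨fun n hn => hf3 n (by omega), hf3', fun n hn => hf3 n (by omega)⟩
  have H4 : QuadGood 1 f4 := ⟨fun n hn => hf4 n (by omega), hf4', fun n hn => hf4 n (by omega)⟩
  have key : ∀ k : ℕ, QuadGood k
      (g * f1 ^ ((k + 3) / 4) * f2 ^ ((k + 2) / 4) * f3 ^ ((k + 1) / 4) * f4 ^ (k / 4)) := by
    intro k
    have := (((Hg.mul (H1.pow ((k + 3) / 4))).mul (H2.pow ((k + 2) / 4))).mul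
      (H3.pow ((k + 1) / 4))).mul (H4.pow (k / 4))
    have hk : 0 + (k + 3) / 4 * 1 + (k + 2) / 4 * 1 + (k + 1) / 4 * 1 + k / 4 * 1 = k := by
      omega
    rwa [hk] at this
  refine ⟨fun n k hnk => (key k).1 n hnk, fun n => (key n).2.1, fun n k hnk => (key k).2.2 n hnk⟩
end
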